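/- arXiv:1805.02911 — 2 statements merged into one kernel-verified Lean document; each statement's English description precedes it below -/
import Mathlib

section
/- Let G be an abelian group in which every nonzero element has order 3, containing two independent elements e_1, e_2 of order 3. Set U = (e_1+e_2)^3 and V = (e_1+e_2)·e_1^2·e_2^2. Then U·V has exactly two factorizations: U·V and (e_1·e_2·(e_1+e_2)^2)·(e_1·e_2·(e_1+e_2)^2); consequently t(U·V, U) = 2. -/
/-- A minimal zero-sum sequence over the abelian group `G`: a nonempty zero-sum
multiset none of whose proper nonempty sub-multisets has sum zero. -/
def IsMinZeroSum {G : Type*} [AddCommGroup G] (S : Multiset G) : Prop :=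
  S ≠ 0 ∧ S.sum = 0 ∧ ∀ T ≤ S, T ≠ 0 → T.sum = 0 → T = S

/-- A factorization of a zero-sum sequence `B` into atoms of `B(G)`. -/
def IsFactorization {G : Type*} [AddCommGroup G] (B : Multiset G)
    (z : Multiset (Multiset G)) : Prop :=
  (∀ A ∈ z, IsMinZeroSum A) ∧ z.sum = B

/-- The usual distance between two factorizations. -/
noncomputable def factDist {G : Type*} [AddCommGroup G] (z z' : Multiset (Multiset G)) : ℕ :=
  letI := Classical.decEq (Multiset G)
  max (z - z').card (z' - z).card

/-- The catenary degree of `B ∈ B(G)`: the least `N` such that any two factorizations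
of `B` can be concatenated by a chain of factorizations with consecutive distances `≤ N`. -/
noncomputable def catenaryDeg {G : Type*} [AddCommGroup G] (B : Multiset G) : ℕ :=
  sInf {N : ℕ | ∀ z z', IsFactorization B z → IsFactorization B z' →
    Relation.ReflTransGen (fun x y => IsFactorization B y ∧ factDist x y ≤ N) z z'}

/-- The tame degree `t(A, U)` of `A ∈ B(G)` with respect to the atom `U`. -/
noncomputable def tameDeg {G : Type*} [AddCommGroup G] (A U : Multiset G) : ℕ :=
  sInf {N : ℕ | ∀ z, IsFactorization A z →
    (∃ z', IsFactorization A z' ∧ U ∈ z') →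
    ∃ z', IsFactorization A z' ∧ U ∈ z' ∧ factDist z z' ≤ N}

/-- The set of (positive) tame degrees of `B(G)`. -/
noncomputable def TaSet (G : Type*) [AddCommGroup G] : Set ℕ :=
  {n | 0 < n ∧ ∃ A U : Multiset G, A.sum = 0 ∧ IsMinZeroSum U ∧ tameDeg A U = n}

/-- The Davenport constant of `G`: the supremum of lengths of minimal zero-sum sequences. -/
noncomputable def davenport (G : Type*) [AddCommGroup G] : ℕ :=
  sSup {n : ℕ | ∃ A : Multiset G, IsMinZeroSum A ∧ A.card = n}

open Multiset

lemma aux_indep {G : Type*} [AddCommGroup G] (e₁ e₂ : G)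
    (h1 : addOrderOf e₁ = 3) (h2 : addOrderOf e₂ = 3)
    (hind : ∀ x : G, x ∈ AddSubgroup.zmultiples e₁ → x ∈ AddSubgroup.zmultiples e₂ → x = 0)
    (a b : ℕ) (h : a • e₁ + b • e₂ = 0) : 3 ∣ a ∧ 3 ∣ b := by
  have he1 : a • e₁ = 0 := by
    apply hind
    · exact AddSubgroup.nsmul_mem _ (AddSubgroup.mem_zmultiples e₁) a
    · have h' : a • e₁ = -(b • e₂) := eq_neg_of_add_eq_zero_left h
      rw [h']
      exact neg_mem (AddSubgroup.nsmul_mem _ (AddSubgroup.mem_zmultiples e₂) b)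
  have he2 : b • e₂ = 0 := by rwa [he1, zero_add] at h
  exact ⟨h1 ▸ addOrderOf_dvd_of_nsmul_eq_zero he1, h2 ▸ addOrderOf_dvd_of_nsmul_eq_zero he2⟩


lemma aux_canonW {G : Type*} [AddCommGroup G] [DecidableEq G] (e₁ e₂ s : G)
    (hne12 : e₁ ≠ e₂) (hne1s : e₁ ≠ s) (hne2s : e₂ ≠ s) :
    ({e₁, e₂, s, s} : Multiset G)
      = Multiset.replicate 2 s + Multiset.replicate 1 e₁ + Multiset.replicate 1 e₂ := by
  ext x
  simp only [Multiset.count_add, Multiset.count_replicate, Multiset.insert_eq_cons,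
    Multiset.count_cons, Multiset.count_singleton]
  split_ifs <;> (try subst_vars) <;> (try rfl) <;> (try omega) <;>
    simp_all only [ne_eq, not_true_eq_false]

lemma aux_count {G : Type*} [AddCommGroup G] [DecidableEq G] (e₁ e₂ s : G)
    (hne12 : e₁ ≠ e₂) (hne1s : e₁ ≠ s) (hne2s : e₂ ≠ s) (c a b : ℕ) (x : G) :
    Multiset.count x (Multiset.replicate c s + Multiset.replicate a e₁ + Multiset.replicate b e₂)
      = if x = s then c else if x = e₁ then a else if x = e₂ then b else 0 := by
  simp only [Multiset.count_add, Multiset.count_replicate]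
  split_ifs <;> (try subst_vars) <;> (try rfl) <;> (try omega) <;>
    simp_all only [ne_eq, not_true_eq_false]


lemma aux_dist_self {G : Type*} [AddCommGroup G] (z : Multiset (Multiset G)) :
    factDist z z = 0 := by
  unfold factDist
  simp

lemma aux_dist2 {G : Type*} [AddCommGroup G] (U V W : Multiset G)
    (hUW : U ≠ W) (hVW : V ≠ W) :
    factDist (Multiset.replicate 2 W) ({U, V} : Multiset (Multiset G)) = 2 := by
  unfold factDist
  generalize Classical.decEq (Multiset G) = inst
  have hWUV : Multiset.count W ({U, V} : Multiset (Multiset G)) = 0 := by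
    rw [Multiset.count_eq_zero]
    simp only [Multiset.insert_eq_cons, Multiset.mem_cons, Multiset.mem_singleton]
    rintro (h | h)
    · exact hUW h.symm
    · exact hVW h.symm
  have h1 : Multiset.replicate 2 W - ({U, V} : Multiset (Multiset G))
      = Multiset.replicate 2 W := by
    ext A
    rw [Multiset.count_sub]
    by_cases hA : A = W
    · rw [hA, hWUV]; omega
    · have : Multiset.count A (Multiset.replicate 2 W) = 0 := by
        rw [Multiset.count_replicate, if_neg (fun h => hA h.symm)]
      rw [this]; omega
  have h2 : ({U, V} : Multiset (Multiset G)) - Multiset.replicate 2 W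
      = ({U, V} : Multiset (Multiset G)) := by
    ext A
    rw [Multiset.count_sub]
    by_cases hA : A = W
    · rw [hA, hWUV]; omega
    · have : Multiset.count A (Multiset.replicate 2 W) = 0 := by
        rw [Multiset.count_replicate, if_neg (fun h => hA h.symm)]
      rw [this]; omega
  rw [h1, h2]
  simp [Multiset.insert_eq_cons]

theorem stmt13 (G : Type*) [AddCommGroup G]
    (hG : ∀ x : G, x ≠ 0 → addOrderOf x = 3) (e₁ e₂ : G)
    (h1 : addOrderOf e₁ = 3) (h2 : addOrderOf e₂ = 3)
    (hind : ∀ x : G, x ∈ AddSubgroup.zmultiples e₁ → x ∈ AddSubgroup.zmultiples e₂ → x = 0) :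
    (∀ z, IsFactorization
        (Multiset.replicate 3 (e₁ + e₂) +
          ((e₁ + e₂) ::ₘ (Multiset.replicate 2 e₁ + Multiset.replicate 2 e₂))) z ↔
      z = ({Multiset.replicate 3 (e₁ + e₂),
            (e₁ + e₂) ::ₘ (Multiset.replicate 2 e₁ + Multiset.replicate 2 e₂)} :
              Multiset (Multiset G)) ∨
      z = Multiset.replicate 2 ({e₁, e₂, e₁ + e₂, e₁ + e₂} : Multiset G)) ∧
    tameDeg
      (Multiset.replicate 3 (e₁ + e₂) +
        ((e₁ + e₂) ::ₘ (Multiset.replicate 2 e₁ + Multiset.replicate 2 e₂)))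
      (Multiset.replicate 3 (e₁ + e₂)) = 2 := by
  classical
  -- distinctness facts
  have hne1 : e₁ ≠ 0 := by intro h; rw [h, addOrderOf_zero] at h1; omega
  have hne2 : e₂ ≠ 0 := by intro h; rw [h, addOrderOf_zero] at h2; omega
  have hnes : e₁ + e₂ ≠ 0 := by
    intro h
    refine hne1 (hind e₁ (AddSubgroup.mem_zmultiples e₁) ?_)
    have : e₁ = -e₂ := eq_neg_of_add_eq_zero_left h
    rw [this]; exact neg_mem (AddSubgroup.mem_zmultiples e₂)
  have hne12 : e₁ ≠ e₂ := fun h =>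
    hne1 (hind e₁ (AddSubgroup.mem_zmultiples e₁) (h ▸ AddSubgroup.mem_zmultiples e₂))
  have hne1s : e₁ ≠ e₁ + e₂ := by
    intro h
    have h' : e₁ + 0 = e₁ + e₂ := by rw [add_zero]; exact h
    exact hne2 (add_left_cancel h').symm
  have hne2s : e₂ ≠ e₁ + e₂ := by
    intro h
    have h' : 0 + e₂ = e₁ + e₂ := by rw [zero_add]; exact h
    exact hne1 (add_right_cancel h').symm
  -- abbreviations
  set s : G := e₁ + e₂ with hs
  set U : Multiset G := Multiset.replicate 3 s with hU
  set V : Multiset G := s ::ₘ (Multiset.replicate 2 e₁ + Multiset.replicate 2 e₂) with hV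
  set W : Multiset G := ({e₁, e₂, s, s} : Multiset G) with hW
  set B : Multiset G := U + V with hB
  -- order-3 facts
  have h3 : ∀ x : G, (3 : ℕ) • x = 0 := by
    intro x
    by_cases hx : x = 0
    · rw [hx, smul_zero]
    · rw [← hG x hx]; exact addOrderOf_nsmul_eq_zero x
  -- canonical forms
  have hVc : V = Multiset.replicate 1 s + Multiset.replicate 2 e₁ + Multiset.replicate 2 e₂ := by
    rw [hV, add_assoc, replicate_one, singleton_add]
  have hWc : W = Multiset.replicate 2 s + Multiset.replicate 1 e₁ + Multiset.replicate 1 e₂ := by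
    rw [hW]; exact aux_canonW e₁ e₂ s hne12 hne1s hne2s
  have hBc : B = Multiset.replicate 4 s + Multiset.replicate 2 e₁ + Multiset.replicate 2 e₂ := by
    rw [hB, hU, hVc]
    have : (4 : ℕ) = 3 + 1 := rfl
    rw [this, Multiset.replicate_add]
    abel
  -- counts
  have hcount : ∀ (c a b : ℕ) (x : G),
      count x (Multiset.replicate c s + Multiset.replicate a e₁ + Multiset.replicate b e₂)
        = if x = s then c else if x = e₁ then a else if x = e₂ then b else 0 :=
    fun c a b x => aux_count e₁ e₂ s hne12 hne1s hne2s c a b x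
  -- sums
  have hsum : ∀ (c a b : ℕ),
      (Multiset.replicate c s + Multiset.replicate a e₁ + Multiset.replicate b e₂).sum
        = (c + a) • e₁ + (c + b) • e₂ := by
    intro c a b
    rw [Multiset.sum_add, Multiset.sum_add, Multiset.sum_replicate, Multiset.sum_replicate,
      Multiset.sum_replicate, hs, nsmul_add, add_nsmul, add_nsmul]
    abel
  -- decomposition of submultisets of B
  have hdec : ∀ T : Multiset G, T ≤ B →
      T = Multiset.replicate (count s T) s + Multiset.replicate (count e₁ T) e₁
        + Multiset.replicate (count e₂ T) e₂ := by
    intro T hT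
    ext x
    rw [hcount]
    split_ifs with hx1 hx2 hx3
    · rw [hx1]
    · rw [hx2]
    · rw [hx3]
    · have hle := Multiset.count_le_of_le x hT
      rw [hBc, hcount] at hle
      simp only [if_neg hx1, if_neg hx2, if_neg hx3] at hle
      omega
  -- classification of zero-sum submultisets
  have hzs : ∀ T : Multiset G, T ≤ B → T.sum = 0 →
      T = 0 ∨ T = U ∨ T = V ∨ T = W ∨ T = B := by
    intro T hTle hTsum
    have hdT := hdec T hTle
    set c := count s T
    set a := count e₁ T
    set b := count e₂ T
    have hcle : c ≤ 4 := by
      have := Multiset.count_le_of_le s hTle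
      rwa [hBc, hcount, if_pos rfl] at this
    have hale : a ≤ 2 := by
      have := Multiset.count_le_of_le e₁ hTle
      rwa [hBc, hcount, if_neg hne1s, if_pos rfl] at this
    have hble : b ≤ 2 := by
      have := Multiset.count_le_of_le e₂ hTle
      rwa [hBc, hcount, if_neg hne2s, if_neg (Ne.symm hne12), if_pos rfl] at this
    have hsum0 : (c + a) • e₁ + (c + b) • e₂ = 0 := by
      rw [← hsum]; rw [hdT] at hTsum; exact hTsum
    obtain ⟨hd1, hd2⟩ := aux_indep e₁ e₂ h1 h2 hind _ _ hsum0
    have hcases : (a = 0 ∧ b = 0 ∧ c = 0) ∨ (a = 2 ∧ b = 2 ∧ c = 1) ∨ (a = 1 ∧ b = 1 ∧ c = 2)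
        ∨ (a = 0 ∧ b = 0 ∧ c = 3) ∨ (a = 2 ∧ b = 2 ∧ c = 4) := by omega
    rcases hcases with ⟨ha, hb, hc⟩ | ⟨ha, hb, hc⟩ | ⟨ha, hb, hc⟩ | ⟨ha, hb, hc⟩ | ⟨ha, hb, hc⟩ <;>
      rw [ha, hb, hc] at hdT
    · left; simpa using hdT
    · right; right; left; rw [hdT, hVc]
    · right; right; right; left; rw [hdT, hWc]
    · right; left; rw [hdT, hU]; simp
    · right; right; right; right; rw [hdT, hBc]
  -- counts of the three atoms
  have hcU1 : count e₁ U = 0 := by rw [hU, count_replicate, if_neg (Ne.symm hne1s)]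
  have hcUs : count s U = 3 := by rw [hU, count_replicate, if_pos rfl]
  have hcU2 : count e₂ U = 0 := by rw [hU, count_replicate, if_neg (Ne.symm hne2s)]
  have hcV1 : count e₁ V = 2 := by
    rw [hVc, hcount, if_neg hne1s, if_pos rfl]
  have hcV2 : count e₂ V = 2 := by
    rw [hVc, hcount, if_neg hne2s, if_neg (Ne.symm hne12), if_pos rfl]
  have hcVs : count s V = 1 := by rw [hVc, hcount, if_pos rfl]
  have hcW1 : count e₁ W = 1 := by
    rw [hWc, hcount, if_neg hne1s, if_pos rfl]
  have hcW2 : count e₂ W = 1 := by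
    rw [hWc, hcount, if_neg hne2s, if_neg (Ne.symm hne12), if_pos rfl]
  have hcWs : count s W = 2 := by rw [hWc, hcount, if_pos rfl]
  have hcB1 : count e₁ B = 2 := by rw [hBc, hcount, if_neg hne1s, if_pos rfl]
  have hcBs : count s B = 4 := by rw [hBc, hcount, if_pos rfl]
  -- distinctness of atoms
  have hUV : U ≠ V := fun h => by rw [h, hcV1] at hcU1; omega
  have hUW : U ≠ W := fun h => by rw [h, hcW1] at hcU1; omega
  have hVW : V ≠ W := fun h => by rw [h, hcW1] at hcV1; omega
  have hUB : U ≠ B := fun h => by rw [h, hcB1] at hcU1; omega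
  -- les
  have hUle : U ≤ B := le_add_right U V
  have hVle : V ≤ B := le_add_left V U
  have hWle : W ≤ B := by
    rw [hWc, hBc]
    refine add_le_add (add_le_add ?_ ?_) ?_ <;>
      exact (Multiset.replicate_le_replicate _).2 (by omega)
  -- nonzero
  have hU0 : U ≠ 0 := by rw [hU]; simp
  have hV0 : V ≠ 0 := by rw [hV]; simp
  have hW0 : W ≠ 0 := by rw [hW]; simp
  -- sums zero
  have hUsum : U.sum = 0 := by rw [hU, Multiset.sum_replicate]; exact h3 s
  have hVsum : V.sum = 0 := by
    rw [hVc, hsum]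
    rw [show (1 + 2 : ℕ) = 3 from rfl]
    rw [h3, h3, add_zero]
  have hWsum : W.sum = 0 := by
    rw [hWc, hsum]
    rw [show (2 + 1 : ℕ) = 3 from rfl]
    rw [h3, h3, add_zero]
  have hBsum : B.sum = 0 := by
    rw [hBc, hsum]
    rw [show (4 + 2 : ℕ) = 6 from rfl]
    have : (6 : ℕ) • e₁ = 0 := by
      rw [show (6 : ℕ) = 3 + 3 from rfl, add_nsmul, h3, add_zero]
    have h6 : ∀ x : G, (6 : ℕ) • x = 0 := by
      intro x; rw [show (6 : ℕ) = 3 + 3 from rfl, add_nsmul, h3, add_zero]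
    rw [h6, h6, add_zero]
  -- minimality
  have hUmin : IsMinZeroSum U := by
    refine ⟨hU0, hUsum, fun T hT hT0 hTs => ?_⟩
    rcases hzs T (le_trans hT hUle) hTs with h | h | h | h | h
    · exact absurd h hT0
    · exact h
    · exfalso
      have := Multiset.count_le_of_le e₁ hT
      rw [h, hcV1, hcU1] at this; omega
    · exfalso
      have := Multiset.count_le_of_le e₁ hT
      rw [h, hcW1, hcU1] at this; omega
    · exfalso
      have := Multiset.count_le_of_le e₁ hT
      rw [h, hcB1, hcU1] at this; omega
  have hVmin : IsMinZeroSum V := by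
    refine ⟨hV0, hVsum, fun T hT hT0 hTs => ?_⟩
    rcases hzs T (le_trans hT hVle) hTs with h | h | h | h | h
    · exact absurd h hT0
    · exfalso
      have := Multiset.count_le_of_le s hT
      rw [h, hcUs, hcVs] at this; omega
    · exact h
    · exfalso
      have := Multiset.count_le_of_le s hT
      rw [h, hcWs, hcVs] at this; omega
    · exfalso
      have := Multiset.count_le_of_le s hT
      rw [h, hcBs, hcVs] at this; omega
  have hWmin : IsMinZeroSum W := by
    refine ⟨hW0, hWsum, fun T hT hT0 hTs => ?_⟩
    rcases hzs T (le_trans hT hWle) hTs with h | h | h | h | h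
    · exact absurd h hT0
    · exfalso
      have := Multiset.count_le_of_le s hT
      rw [h, hcUs, hcWs] at this; omega
    · exfalso
      have := Multiset.count_le_of_le e₁ hT
      rw [h, hcV1, hcW1] at this; omega
    · exact h
    · exfalso
      have := Multiset.count_le_of_le e₁ hT
      rw [h, hcB1, hcW1] at this; omega
  -- the two factorizations
  have hz1fact : IsFactorization B ({U, V} : Multiset (Multiset G)) := by
    constructor
    · intro A hA
      rw [insert_eq_cons, Multiset.mem_cons, Multiset.mem_singleton] at hA
      rcases hA with rfl | rfl
      · exact hUmin
      · exact hVmin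
    · simp [hB]
  have hWW : W + W = B := by
    ext x
    rw [count_add, hWc, hBc, hcount, hcount]
    split_ifs <;> omega
  have hz2fact : IsFactorization B (Multiset.replicate 2 W) := by
    constructor
    · intro A hA
      rw [Multiset.eq_of_mem_replicate hA]
      exact hWmin
    · rw [Multiset.sum_replicate, two_nsmul, hWW]
  -- classification of factorizations
  have hcls : ∀ z, IsFactorization B z ↔
      z = ({U, V} : Multiset (Multiset G)) ∨ z = Multiset.replicate 2 W := by
    intro z
    constructor
    · rintro ⟨hmem, hsumz⟩
      have hAcases : ∀ A ∈ z, A = U ∨ A = V ∨ A = W := by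
        intro A hA
        have hAle : A ≤ B := by
          obtain ⟨t, rfl⟩ := Multiset.exists_cons_of_mem hA
          rw [← hsumz, Multiset.sum_cons]
          exact le_add_right A t.sum
        obtain ⟨hA0, hAsum, hAmin⟩ := hmem A hA
        rcases hzs A hAle hAsum with h | h | h | h | h
        · exact absurd h hA0
        · exact Or.inl h
        · exact Or.inr (Or.inl h)
        · exact Or.inr (Or.inr h)
        · exfalso
          have hUA : U = A := hAmin U (by rw [h]; exact hUle) hU0 hUsum
          exact hUB (hUA.trans h)
      have hzdec : z = Multiset.replicate (count U z) U + Multiset.replicate (count V z) V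
          + Multiset.replicate (count W z) W := by
        ext A
        simp only [count_add, count_replicate]
        by_cases hA1 : A = U
        · subst hA1; rw [if_pos rfl, if_neg (Ne.symm hUV), if_neg (Ne.symm hUW)]; omega
        · by_cases hA2 : A = V
          · subst hA2; rw [if_neg hUV, if_pos rfl, if_neg (Ne.symm hVW)]; omega
          · by_cases hA3 : A = W
            · subst hA3; rw [if_neg hUW, if_neg hVW, if_pos rfl]; omega
            · rw [if_neg (fun h => hA1 h.symm), if_neg (fun h => hA2 h.symm),
                if_neg (fun h => hA3 h.symm)]
              rw [Multiset.count_eq_zero]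
              intro hA
              rcases hAcases A hA with h | h | h <;> [exact hA1 h; exact hA2 h; exact hA3 h]
      have hsumz' : (Multiset.replicate (count U z) U + Multiset.replicate (count V z) V
          + Multiset.replicate (count W z) W).sum = B := by rw [← hzdec]; exact hsumz
      rw [Multiset.sum_add, Multiset.sum_add, Multiset.sum_replicate, Multiset.sum_replicate,
        Multiset.sum_replicate] at hsumz'
      have hce1 : count e₁ ((count U z) • U + (count V z) • V + (count W z) • W)
          = count e₁ B := by rw [hsumz']
      have hcs : count s ((count U z) • U + (count V z) • V + (count W z) • W)
          = count s B := by rw [hsumz']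
      rw [count_add, count_add, count_nsmul, count_nsmul, count_nsmul,
        hcU1, hcV1, hcW1, hcB1] at hce1
      rw [count_add, count_add, count_nsmul, count_nsmul, count_nsmul,
        hcUs, hcVs, hcWs, hcBs] at hcs
      have hpqr : (count U z = 1 ∧ count V z = 1 ∧ count W z = 0) ∨
          (count U z = 0 ∧ count V z = 0 ∧ count W z = 2) := by omega
      rcases hpqr with ⟨hp, hq, hr⟩ | ⟨hp, hq, hr⟩
      · left
        rw [hzdec, hp, hq, hr]
        simp only [Multiset.replicate_one, Multiset.replicate_zero, add_zero,
          Multiset.singleton_add, insert_eq_cons]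
      · right; rw [hzdec, hp, hq, hr]; simp
    · rintro (rfl | rfl)
      · exact hz1fact
      · exact hz2fact
  refine ⟨hcls, ?_⟩
  -- tame degree
  have hUmem : U ∈ ({U, V} : Multiset (Multiset G)) := by simp
  have hUnotmem2 : U ∉ Multiset.replicate 2 W := by
    intro h
    exact hUW (Multiset.eq_of_mem_replicate h)
  have hd11 : factDist ({U, V} : Multiset (Multiset G)) ({U, V} : Multiset (Multiset G)) = 0 :=
    aux_dist_self _
  have hd21 : factDist (Multiset.replicate 2 W) ({U, V} : Multiset (Multiset G)) = 2 :=
    aux_dist2 U V W hUW hVW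
  have hcard2 : (({U, V} : Multiset (Multiset G))).card = 2 := by simp [insert_eq_cons]
  simp only [tameDeg]
  have hmem2 : 2 ∈ {N : ℕ | ∀ z, IsFactorization B z →
      (∃ z', IsFactorization B z' ∧ U ∈ z') →
      ∃ z', IsFactorization B z' ∧ U ∈ z' ∧ factDist z z' ≤ N} := by
    intro z hz _
    refine ⟨({U, V} : Multiset (Multiset G)), hz1fact, hUmem, ?_⟩
    rcases (hcls z).1 hz with rfl | rfl
    · rw [hd11]; omega
    · rw [hd21]
  refine le_antisymm (Nat.sInf_le hmem2) ?_
  apply le_csInf ⟨2, hmem2⟩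
  intro n hn
  obtain ⟨z', hz'fact, hz'mem, hz'dist⟩ := hn (Multiset.replicate 2 W) hz2fact
    ⟨({U, V} : Multiset (Multiset G)), hz1fact, hUmem⟩
  rcases (hcls z').1 hz'fact with rfl | rfl
  · rw [hd21] at hz'dist; exact hz'dist
  · exact absurd hz'mem hUnotmem2
end

section
/- Let H = H_1 × ... × H_n be a finite product of reduced commutative BF-monoids. Then the set of tame degrees satisfies Ta(H) = Ta(H_1) ∪ ... ∪ Ta(H_n). -/
/-- The set of factorization lengths of `a` in a commutative cancellative monoid. -/
def lengthSet {M : Type*} [CancelCommMonoid M] (a : M) : Set ℕ :=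
  {n | ∃ l : Multiset M, (∀ u ∈ l, Irreducible u) ∧ l.prod = a ∧ l.card = n}

/-- A factorization of `a` into irreducible elements (for reduced monoids). -/
def IsMFactorization {M : Type*} [CancelCommMonoid M] (a : M) (z : Multiset M) : Prop :=
  (∀ u ∈ z, Irreducible u) ∧ z.prod = a

/-- The usual distance between two factorizations. -/
noncomputable def mfactDist {M : Type*} [CancelCommMonoid M] (z z' : Multiset M) : ℕ :=
  letI := Classical.decEq M
  max (z - z').card (z' - z).card

/-- The tame degree `t(a, u)`. -/
noncomputable def mtameDeg {M : Type*} [CancelCommMonoid M] (a u : M) : ℕ :=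
  sInf {N : ℕ | ∀ z, IsMFactorization a z →
    (∃ z', IsMFactorization a z' ∧ u ∈ z') →
    ∃ z', IsMFactorization a z' ∧ u ∈ z' ∧ mfactDist z z' ≤ N}

/-- The set of positive tame degrees `Ta(M)`. -/
noncomputable def mTaSet (M : Type*) [CancelCommMonoid M] : Set ℕ :=
  {n | 0 < n ∧ ∃ a u : M, Irreducible u ∧ mtameDeg a u = n}

section Aux

lemma aux_map_sub_of_inj {α β : Type*} [DecidableEq α] [DecidableEq β] {f : α → β}
    (hf : Function.Injective f) (s t : Multiset α) :
    s.map f - t.map f = (s - t).map f := by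
  ext b
  by_cases hb : ∃ a, f a = b
  · obtain ⟨a, rfl⟩ := hb
    simp [Multiset.count_sub, Multiset.count_map_eq_count' f _ hf]
  · have h0 : ∀ m : Multiset α, Multiset.count b (m.map f) = 0 := fun m =>
      Multiset.count_eq_zero.2 fun hm => by
        obtain ⟨a, _, h⟩ := Multiset.mem_map.1 hm
        exact hb ⟨a, h⟩
    simp [Multiset.count_sub, h0]

lemma aux_map_sub_le {α β : Type*} [DecidableEq α] [DecidableEq β] (f : α → β)
    (s t : Multiset α) : s.map f - t.map f ≤ (s - t).map f := by
  rw [tsub_le_iff_right, ← Multiset.map_add]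
  exact Multiset.map_le_map le_tsub_add

lemma aux_card_sub_proj_le {α β : Type*} [DecidableEq α] [DecidableEq β]
    (p : α → Prop) [DecidablePred p] (g : α → β) (s t : Multiset α) :
    Multiset.card ((s.filter p).map g - (t.filter p).map g) ≤ Multiset.card (s - t) :=
  calc Multiset.card ((s.filter p).map g - (t.filter p).map g)
      ≤ Multiset.card ((s.filter p - t.filter p).map g) :=
        Multiset.card_le_card (aux_map_sub_le g _ _)
    _ = Multiset.card (s.filter p - t.filter p) := Multiset.card_map _ _
    _ = Multiset.card ((s - t).filter p) := by rw [Multiset.filter_sub]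
    _ ≤ Multiset.card (s - t) := Multiset.card_le_card (Multiset.filter_le _ _)

lemma aux_dist_map_inj {M : Type*} [CancelCommMonoid M] {N : Type*} [CancelCommMonoid N]
    {f : M → N} (hf : Function.Injective f) (s t : Multiset M) :
    mfactDist (s.map f) (t.map f) = mfactDist s t := by
  letI := Classical.decEq M
  letI := Classical.decEq N
  unfold mfactDist
  rw [aux_map_sub_of_inj hf, aux_map_sub_of_inj hf, Multiset.card_map, Multiset.card_map]

lemma aux_dist_add_right {M : Type*} [CancelCommMonoid M] (s t c : Multiset M) :
    mfactDist (s + c) (t + c) = mfactDist s t := by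
  letI := Classical.decEq M
  unfold mfactDist
  rw [add_tsub_add_eq_tsub_right, add_tsub_add_eq_tsub_right]

lemma aux_red_irred_ne_one {M : Type*} [CancelCommMonoid M]
    {u : M} (hu : Irreducible u) : u ≠ 1 :=
  fun h => hu.not_isUnit (h ▸ isUnit_one)

end Aux

section Pi

variable {ι : Type*} [Fintype ι] [DecidableEq ι] {H : ι → Type*} [∀ i, CancelCommMonoid (H i)]

omit [Fintype ι] [DecidableEq ι] in
lemma pi_red (hred : ∀ i (x : H i), IsUnit x → x = 1) :
    ∀ x : ∀ i, H i, IsUnit x → x = 1 := by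
  rintro x ⟨u, rfl⟩
  funext i
  exact hred i _ (IsUnit.of_mul_eq_one ((↑u⁻¹ : ∀ i, H i) i)
    (by rw [← Pi.mul_apply, u.mul_inv]; rfl))

omit [Fintype ι] in
lemma pi_irred_mulSingle (hred : ∀ i (x : H i), IsUnit x → x = 1)
    {i : ι} {a : H i} (ha : Irreducible a) : Irreducible (Pi.mulSingle i a) := by
  constructor
  · intro h
    have := congrFun (pi_red hred _ h) i
    rw [Pi.mulSingle_eq_same] at this
    exact ha.not_isUnit (this ▸ isUnit_one)
  · intro v w hvw
    have hi : a = v i * w i := by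
      have := congrFun hvw i
      rwa [Pi.mulSingle_eq_same, Pi.mul_apply] at this
    have hj : ∀ j, j ≠ i → v j = 1 ∧ w j = 1 := by
      intro j hji
      have := congrFun hvw j
      rw [Pi.mulSingle_eq_of_ne hji, Pi.mul_apply] at this
      refine ⟨hred j _ (IsUnit.of_mul_eq_one _ this.symm),
        hred j _ (IsUnit.of_mul_eq_one _ (by rw [mul_comm] at this; exact this.symm))⟩
    rcases ha.isUnit_or_isUnit hi with h | h
    · left
      have hv1 : v = 1 := by
        funext j
        by_cases hji : j = i
        · subst hji; exact hred j _ h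
        · exact (hj j hji).1
      rw [hv1]; exact isUnit_one
    · right
      have hw1 : w = 1 := by
        funext j
        by_cases hji : j = i
        · subst hji; exact hred j _ h
        · exact (hj j hji).2
      rw [hw1]; exact isUnit_one

omit [Fintype ι] in
lemma pi_irred_classify (hred : ∀ i (x : H i), IsUnit x → x = 1)
    {u : ∀ i, H i} (hu : Irreducible u) :
    ∃ i, ∃ a : H i, Irreducible a ∧ u = Pi.mulSingle i a := by
  have hne : u ≠ 1 := aux_red_irred_ne_one hu
  have : ∃ i, u i ≠ 1 := by
    by_contra h
    push_neg at h
    exact hne (funext h)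
  obtain ⟨i, hi⟩ := this
  have hdecomp : u = Pi.mulSingle i (u i) * Function.update u i 1 := by
    funext j
    by_cases hji : j = i
    · subst hji; simp
    · simp [Pi.mulSingle_eq_of_ne hji, Function.update_of_ne hji]
  rcases hu.isUnit_or_isUnit hdecomp with h | h
  · exfalso
    have := congrFun (pi_red hred _ h) i
    rw [Pi.mulSingle_eq_same] at this
    exact hi this
  · have hupd : Function.update u i 1 = 1 := pi_red hred _ h
    rw [hupd, mul_one] at hdecomp
    refine ⟨i, u i, ⟨fun h' => hi (hred i _ h'), ?_⟩, hdecomp⟩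
    intro b c hbc
    have hsplit : u = Pi.mulSingle i b * Pi.mulSingle i c := by
      conv_lhs => rw [hdecomp, hbc]
      exact (MonoidHom.mulSingle H i).map_mul b c
    rcases hu.isUnit_or_isUnit hsplit with h' | h'
    · left
      have := congrFun (pi_red hred _ h') i
      rw [Pi.mulSingle_eq_same] at this
      exact this ▸ isUnit_one
    · right
      have := congrFun (pi_red hred _ h') i
      rw [Pi.mulSingle_eq_same] at this
      exact this ▸ isUnit_one

/-- Projection of a multiset of the product onto coordinate `i`. -/
noncomputable def projm (i : ι) (z : Multiset (∀ j, H j)) : Multiset (H i) :=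
  (@Multiset.filter _ (fun x => x i ≠ 1) (Classical.decPred _) z).map (fun x => x i)

lemma projm_sum (i : ι) (w : ∀ j, Multiset (H j))
    (hw : ∀ x ∈ w i, x ≠ (1 : H i)) :
    projm i (∑ j, (w j).map (Pi.mulSingle j)) = w i := by
  letI : DecidablePred (fun x : ∀ j, H j => x i ≠ 1) := Classical.decPred _
  unfold projm
  rw [← Finset.add_sum_erase Finset.univ _ (Finset.mem_univ i), Multiset.filter_add]
  have h1 : Multiset.filter (fun x : ∀ j, H j => x i ≠ 1) ((w i).map (Pi.mulSingle i))
      = (w i).map (Pi.mulSingle i) := by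
    rw [Multiset.filter_eq_self]
    intro x hx
    obtain ⟨a, ha, rfl⟩ := Multiset.mem_map.1 hx
    rw [Pi.mulSingle_eq_same]
    exact hw a ha
  have h2 : Multiset.filter (fun x : ∀ j, H j => x i ≠ 1)
      (∑ j ∈ Finset.univ.erase i, (w j).map (Pi.mulSingle j)) = 0 := by
    rw [Multiset.filter_eq_nil]
    intro x hx
    obtain ⟨j, hj, hxj⟩ := Multiset.mem_sum.1 hx
    obtain ⟨a, _, rfl⟩ := Multiset.mem_map.1 hxj
    rw [Pi.mulSingle_eq_of_ne (Finset.ne_of_mem_erase hj).symm]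
    simp
  rw [h1, h2, add_zero, Multiset.map_map]
  rw [show ((fun x : ∀ j, H j => x i) ∘ Pi.mulSingle i) = id from
    funext fun a => Pi.mulSingle_eq_same i a, Multiset.map_id]

lemma projm_fact (hred : ∀ i (x : H i), IsUnit x → x = 1) (i : ι)
    {A : ∀ j, H j} {z : Multiset (∀ j, H j)} (hz : IsMFactorization A z) :
    IsMFactorization (A i) (projm i z) ∧
      ∃ R, z = (projm i z).map (Pi.mulSingle i) + R ∧ ∀ x ∈ R, x i = 1 := by
  letI hdP : DecidablePred (fun x : ∀ j, H j => x i ≠ 1) := Classical.decPred _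
  obtain ⟨hzirr, hzprod⟩ := hz
  have hmem : ∀ x ∈ Multiset.filter (fun x : ∀ j, H j => x i ≠ 1) z,
      Irreducible (x i) ∧ x = Pi.mulSingle i (x i) := by
    intro x hx
    have hxz := Multiset.mem_of_mem_filter hx
    have hxP := Multiset.of_mem_filter hx
    obtain ⟨j, a, hairr, rfl⟩ := pi_irred_classify hred (hzirr x hxz)
    by_cases hji : j = i
    · subst hji
      rw [Pi.mulSingle_eq_same]
      exact ⟨hairr, rfl⟩
    · exact absurd (Pi.mulSingle_eq_of_ne (fun h => hji h.symm) a) hxP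
  have hfilter_eq : Multiset.filter (fun x : ∀ j, H j => x i ≠ 1) z
      = (projm i z).map (Pi.mulSingle i) := by
    unfold projm
    rw [Multiset.map_map]
    calc Multiset.filter (fun x : ∀ j, H j => x i ≠ 1) z
        = Multiset.map id (Multiset.filter (fun x : ∀ j, H j => x i ≠ 1) z) :=
          (Multiset.map_id _).symm
      _ = Multiset.map (Pi.mulSingle i ∘ fun x : ∀ j, H j => x i)
            (Multiset.filter (fun x : ∀ j, H j => x i ≠ 1) z) :=
          Multiset.map_congr rfl (fun x hx => (hmem x hx).2)
  set R := Multiset.filter (fun x : ∀ j, H j => ¬ x i ≠ 1) z with hR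
  have hdecomp : z = (projm i z).map (Pi.mulSingle i) + R := by
    conv_lhs => rw [← Multiset.filter_add_not (fun x : ∀ j, H j => x i ≠ 1) z]
    rw [hfilter_eq]
  have hR1 : ∀ x ∈ R, x i = 1 := by
    intro x hx
    have := Multiset.of_mem_filter hx
    simpa using this
  refine ⟨⟨?_, ?_⟩, R, hdecomp, hR1⟩
  · intro a ha
    unfold projm at ha
    obtain ⟨x, hx, rfl⟩ := Multiset.mem_map.1 ha
    exact (hmem x hx).1
  · have heval : ∀ m : Multiset (∀ j, H j), m.prod i = (m.map (fun x => x i)).prod :=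
      fun m => (Multiset.prod_hom m (Pi.evalMonoidHom H i)).symm
    have hz1 : (R.map (fun x : ∀ j, H j => x i)).prod = 1 := by
      apply Multiset.prod_eq_one
      intro x hx
      obtain ⟨y, hy, rfl⟩ := Multiset.mem_map.1 hx
      exact hR1 y hy
    have := congrFun hzprod i
    conv_lhs at this => rw [hdecomp]
    rw [Multiset.prod_add, Pi.mul_apply, heval, heval, hz1, mul_one, Multiset.map_map] at this
    rw [show ((fun x : ∀ j, H j => x i) ∘ Pi.mulSingle i) = id from
      funext fun a => Pi.mulSingle_eq_same i a, Multiset.map_id] at this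
    exact this

lemma mem_projm {i : ι} {u : H i} (hu : Irreducible u) {z : Multiset (∀ j, H j)}
    (hz : Pi.mulSingle i u ∈ z) : u ∈ projm i z := by
  letI : DecidablePred (fun x : ∀ j, H j => x i ≠ 1) := Classical.decPred _
  unfold projm
  refine Multiset.mem_map.2 ⟨Pi.mulSingle i u, ?_, Pi.mulSingle_eq_same i u⟩
  refine Multiset.mem_filter.2 ⟨hz, ?_⟩
  rw [Pi.mulSingle_eq_same]
  exact aux_red_irred_ne_one hu

lemma fact_sum (hred : ∀ i (x : H i), IsUnit x → x = 1)
    {A : ∀ j, H j} (w : ∀ j, Multiset (H j))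
    (hw : ∀ j, IsMFactorization (A j) (w j)) :
    IsMFactorization A (∑ j, (w j).map (Pi.mulSingle j)) := by
  constructor
  · intro x hx
    obtain ⟨j, _, hxj⟩ := Multiset.mem_sum.1 hx
    obtain ⟨a, ha, rfl⟩ := Multiset.mem_map.1 hxj
    exact pi_irred_mulSingle hred ((hw j).1 a ha)
  · rw [Multiset.prod_sum]
    have hmap : ∀ j, ((w j).map (Pi.mulSingle j)).prod = Pi.mulSingle j (A j) := by
      intro j
      have := Multiset.prod_hom (w j) (MonoidHom.mulSingle H j)
      simp only [MonoidHom.mulSingle_apply, MonoidHom.coe_mulSingle] at this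
      rw [this, (hw j).2]
    rw [Finset.prod_congr rfl (fun j _ => hmap j), Finset.univ_prod_mulSingle]

omit [Fintype ι] [DecidableEq ι] in
lemma dist_projm_le (i : ι) (z z' : Multiset (∀ j, H j)) :
    mfactDist (projm i z) (projm i z') ≤ mfactDist z z' := by
  letI := Classical.decEq (∀ j, H j)
  letI := Classical.decEq (H i)
  letI : DecidablePred (fun x : ∀ j, H j => x i ≠ 1) := Classical.decPred _
  unfold mfactDist projm
  exact max_le
    ((aux_card_sub_proj_le _ _ z z').trans (le_max_left _ _))
    ((aux_card_sub_proj_le _ _ z' z).trans (le_max_right _ _))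

lemma tame_pi (hred : ∀ i (x : H i), IsUnit x → x = 1)
    (hfac : ∀ i (a : H i), ∃ l, IsMFactorization a l)
    (i : ι) (A : ∀ j, H j) {u : H i} (hu : Irreducible u) :
    mtameDeg A (Pi.mulSingle i u) = mtameDeg (A i) u := by
  unfold mtameDeg
  congr 1
  ext N
  simp only [Set.mem_setOf_eq]
  constructor
  · -- pi condition implies component condition
    intro hN z hz hz0
    obtain ⟨z₀, hz₀, hu₀⟩ := hz0
    have hlspec : ∀ j, IsMFactorization (A j) (Classical.choose (hfac j (A j))) := fun j =>
      Classical.choose_spec (hfac j (A j))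
    set l : ∀ j, Multiset (H j) := fun j => Classical.choose (hfac j (A j)) with hl
    have hwfact : ∀ m, IsMFactorization (A i) m →
        ∀ j, IsMFactorization (A j) (Function.update l i m j) := by
      intro m hm j
      by_cases hji : j = i
      · subst hji; simpa using hm
      · simpa [Function.update_of_ne hji] using hlspec j
    obtain ⟨Z', hZ'fact, hUZ', hdist⟩ :=
      hN (∑ j, ((Function.update l i z) j).map (Pi.mulSingle j))
        (fact_sum hred _ (hwfact z hz))
        ⟨∑ j, ((Function.update l i z₀) j).map (Pi.mulSingle j),
          fact_sum hred _ (hwfact z₀ hz₀), by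
            refine Multiset.mem_sum.2 ⟨i, Finset.mem_univ i, ?_⟩
            rw [Function.update_self]
            exact Multiset.mem_map_of_mem _ hu₀⟩
    refine ⟨projm i Z', (projm_fact hred i hZ'fact).1, mem_projm hu hUZ', ?_⟩
    have hprojZ : projm i (∑ j, ((Function.update l i z) j).map (Pi.mulSingle j)) = z := by
      rw [projm_sum i (Function.update l i z) ?_, Function.update_self]
      intro x hx
      rw [Function.update_self] at hx
      exact aux_red_irred_ne_one (hz.1 x hx)
    calc mfactDist z (projm i Z')
        = mfactDist (projm i (∑ j, ((Function.update l i z) j).map (Pi.mulSingle j)))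
            (projm i Z') := by rw [hprojZ]
      _ ≤ mfactDist (∑ j, ((Function.update l i z) j).map (Pi.mulSingle j)) Z' :=
          dist_projm_le i _ Z'
      _ ≤ N := hdist
  · -- component condition implies pi condition
    intro hN Z hZ hZ0
    obtain ⟨Z₀, hZ₀, hU₀⟩ := hZ0
    obtain ⟨hfZ, R, hdecompZ, hR1⟩ := projm_fact hred i hZ
    obtain ⟨w', hw'fact, huw', hdw⟩ := hN (projm i Z) hfZ
      ⟨projm i Z₀, (projm_fact hred i hZ₀).1, mem_projm hu hU₀⟩
    have hmapprod : ∀ m : Multiset (H i),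
        (m.map (Pi.mulSingle i)).prod = Pi.mulSingle i m.prod := by
      intro m
      have := Multiset.prod_hom m (MonoidHom.mulSingle H i)
      simpa only [MonoidHom.mulSingle_apply, MonoidHom.coe_mulSingle] using this
    refine ⟨w'.map (Pi.mulSingle i) + R, ⟨?_, ?_⟩, ?_, ?_⟩
    · intro x hx
      rcases Multiset.mem_add.1 hx with hx | hx
      · obtain ⟨a, ha, rfl⟩ := Multiset.mem_map.1 hx
        exact pi_irred_mulSingle hred (hw'fact.1 a ha)
      · exact hZ.1 x (hdecompZ ▸ Multiset.mem_add.2 (Or.inr hx))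
    · have h1 : ((projm i Z).map (Pi.mulSingle i) + R).prod = A := by
        rw [← hdecompZ]; exact hZ.2
      rw [Multiset.prod_add, hmapprod] at h1 ⊢
      rw [hw'fact.2, ← hfZ.2, h1]
    · exact Multiset.mem_add.2 (Or.inl (Multiset.mem_map_of_mem _ huw'))
    · calc mfactDist Z (w'.map (Pi.mulSingle i) + R)
          = mfactDist ((projm i Z).map (Pi.mulSingle i) + R)
              (w'.map (Pi.mulSingle i) + R) := by rw [← hdecompZ]
      _ = mfactDist ((projm i Z).map (Pi.mulSingle i)) (w'.map (Pi.mulSingle i)) :=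
          aux_dist_add_right _ _ _
      _ = mfactDist (projm i Z) w' := aux_dist_map_inj (Pi.mulSingle_injective (M := H) i) _ _
      _ ≤ N := hdw

end Pi

/-- For a finite product of reduced commutative BF-monoids,
`Ta(H₁ × ⋯ × Hₙ) = Ta(H₁) ∪ ⋯ ∪ Ta(Hₙ)`. -/
theorem stmt17 (n : ℕ) (H : Fin n → Type*) [∀ i, CancelCommMonoid (H i)]
    (hred : ∀ i (x : H i), IsUnit x → x = 1)
    (hBF : ∀ i (a : H i), (lengthSet a).Finite ∧ (lengthSet a).Nonempty) :
    mTaSet (∀ i, H i) = ⋃ i, mTaSet (H i) := by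
  have hfac : ∀ i (a : H i), ∃ l, IsMFactorization a l := by
    intro i a
    obtain ⟨m, l, h1, h2, _⟩ := (hBF i a).2
    exact ⟨l, h1, h2⟩
  ext N
  simp only [Set.mem_iUnion]
  constructor
  · rintro ⟨hpos, A, U, hU, rfl⟩
    obtain ⟨i, u, hu, rfl⟩ := pi_irred_classify hred hU
    exact ⟨i, hpos, A i, u, hu, (tame_pi hred hfac i A hu).symm⟩
  · rintro ⟨i, hpos, a, u, hu, rfl⟩
    refine ⟨hpos, Pi.mulSingle i a, Pi.mulSingle i u, pi_irred_mulSingle hred hu, ?_⟩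
    rw [tame_pi hred hfac i _ hu, Pi.mulSingle_eq_same]
end
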